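/- Let a > 0 and let M be a real number with M ≥ λ² ≥ a². Then ∑_{f ∈ L, ‖f‖² ≥ M} exp(−π‖f‖²) ≤ π·∫_M^∞ ((2√t/a + 1)⁴ − (2√M/a − 1)⁴)·exp(−πt) dt. -/

import Mathlib

open MeasureTheory Metric Set Filter Topology
open scoped ENNReal

local notation "E4" => EuclideanSpace ℝ (Fin 4)

lemma vol4_ball (x : E4) {r : ℝ} (hr : 0 ≤ r) :
    volume (ball x r) = ENNReal.ofReal (r ^ 4) * volume (ball (0 : E4) 1) := by
  rw [Measure.addHaar_ball volume x hr, finrank_euclideanSpace_fin]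

lemma vol4_closedBall (x : E4) {r : ℝ} (hr : 0 ≤ r) :
    volume (closedBall x r) = ENNReal.ofReal (r ^ 4) * volume (ball (0 : E4) 1) := by
  rw [Measure.addHaar_closedBall volume x hr, finrank_euclideanSpace_fin]

lemma pack_card (L : Submodule ℤ E4) (lam a : ℝ) (ha : 0 < a)
    (hmin : ∀ f ∈ L, f ≠ 0 → lam ≤ ‖f‖) (hal : a ≤ lam)
    (r R : ℝ) (hr : 0 ≤ r) (hrR : r ≤ R)
    (F : Finset E4) (hF : ∀ f ∈ F, f ∈ L ∧ r ≤ ‖f‖ ∧ ‖f‖ ≤ R) :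
    (F.card : ℝ) * (a / 2) ^ 4 + (max (r - a / 2) 0) ^ 4 ≤ (R + a / 2) ^ 4 := by
  set κ := volume (ball (0 : E4) 1) with hκ
  have hκ0 : κ ≠ 0 := (measure_ball_pos volume _ one_pos).ne'
  have hκt : κ ≠ ⊤ := measure_ball_lt_top.ne
  set r' : ℝ := max (r - a / 2) 0 with hr'
  have hr'0 : 0 ≤ r' := le_max_right _ _
  have ha2 : (0:ℝ) < a / 2 := by linarith
  have hR0 : 0 ≤ R + a / 2 := by linarith
  -- disjointness
  have hdisj : (↑F : Set E4).PairwiseDisjoint (fun f => ball f (a / 2)) := by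
    intro f hf g hg hfg
    apply ball_disjoint_ball
    have hmem : f - g ∈ L := sub_mem (hF f hf).1 (hF g hg).1
    have hne : f - g ≠ 0 := sub_ne_zero.2 hfg
    have := hmin _ hmem hne
    rw [dist_eq_norm]
    linarith
  -- inclusion
  have hsub : (⋃ f ∈ F, ball f (a / 2)) ⊆ closedBall (0 : E4) (R + a / 2) \ ball 0 r' := by
    intro x hx
    simp only [mem_iUnion, exists_prop] at hx
    obtain ⟨f, hf, hxf⟩ := hx
    rw [mem_ball, dist_eq_norm] at hxf
    obtain ⟨-, hfr, hfR⟩ := hF f hf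
    have h1 : ‖x‖ ≤ ‖f‖ + ‖x - f‖ := by
      simpa using norm_add_le (f) (x - f)
    have h2 : ‖f‖ ≤ ‖x‖ + ‖x - f‖ := by
      have : ‖f‖ ≤ ‖x‖ + ‖f - x‖ := by simpa using norm_add_le x (f - x)
      simpa [norm_sub_rev] using this
    constructor
    · rw [mem_closedBall, dist_eq_norm, sub_zero]
      linarith
    · rw [mem_ball, dist_eq_norm, sub_zero]
      intro hlt
      have : ‖x‖ ≥ r' := max_le (by linarith) (norm_nonneg x)
      linarith
  have hmeas : volume (⋃ f ∈ F, ball f (a / 2)) = (F.card : ℝ≥0∞) * (ENNReal.ofReal ((a/2)^4) * κ) := by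
    rw [measure_biUnion_finset hdisj fun f _ => measurableSet_ball]
    rw [Finset.sum_congr rfl fun f _ => vol4_ball f ha2.le]
    rw [Finset.sum_const, nsmul_eq_mul]
  have hdisj2 : Disjoint (⋃ f ∈ F, ball f (a / 2)) (ball (0:E4) r') :=
    (disjoint_sdiff_left.mono_left hsub)
  have hunion : volume (⋃ f ∈ F, ball f (a / 2)) + volume (ball (0:E4) r')
      ≤ volume (closedBall (0 : E4) (R + a / 2)) := by
    rw [← measure_union hdisj2 measurableSet_ball]
    apply measure_mono
    apply union_subset (hsub.trans diff_subset)
    apply ball_subset_closedBall.trans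
    apply closedBall_subset_closedBall
    have : r' ≤ r := max_le (by linarith) hr
    linarith
  rw [hmeas, vol4_ball _ hr'0, vol4_closedBall _ hR0] at hunion
  rw [← hκ, ← mul_assoc, ← add_mul] at hunion
  rw [ENNReal.mul_le_mul_iff_left hκ0 hκt] at hunion
  have : ENNReal.ofReal ((F.card : ℝ) * (a/2)^4 + r'^4) ≤ ENNReal.ofReal ((R + a/2)^4) := by
    rw [ENNReal.ofReal_add (by positivity) (by positivity), ENNReal.ofReal_mul (by positivity)]
    simpa [ENNReal.ofReal_natCast] using hunion
  rw [ENNReal.ofReal_le_ofReal_iff (by positivity)] at this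
  exact this

lemma pack_set (L : Submodule ℤ E4) (lam a : ℝ) (ha : 0 < a)
    (hmin : ∀ f ∈ L, f ≠ 0 → lam ≤ ‖f‖) (hal : a ≤ lam)
    (r R : ℝ) (hr : 0 ≤ r) (hrR : r ≤ R) :
    {f : E4 | f ∈ L ∧ r ≤ ‖f‖ ∧ ‖f‖ ≤ R}.Finite ∧
      (({f : E4 | f ∈ L ∧ r ≤ ‖f‖ ∧ ‖f‖ ≤ R}.ncard : ℝ) * (a / 2) ^ 4
        + (max (r - a / 2) 0) ^ 4 ≤ (R + a / 2) ^ 4) := by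
  set S := {f : E4 | f ∈ L ∧ r ≤ ‖f‖ ∧ ‖f‖ ≤ R} with hS
  have ha2 : (0:ℝ) < (a/2)^4 := by positivity
  have hcard : ∀ F : Finset E4, ↑F ⊆ S → (F.card : ℝ) ≤ (R + a/2)^4 / (a/2)^4 := by
    intro F hFS
    have := pack_card L lam a ha hmin hal r R hr hrR F (fun f hf => hFS hf)
    rw [le_div_iff₀ ha2]
    have : (0:ℝ) ≤ (max (r - a / 2) 0)^4 := by positivity
    linarith
  have hfin : S.Finite := by
    by_contra h
    have hinf : S.Infinite := h
    obtain ⟨F, hFS, hFc⟩ := hinf.exists_subset_card_eq (⌈(R + a/2)^4 / (a/2)^4⌉₊ + 1)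
    have h1 := hcard F hFS
    rw [hFc] at h1
    have h2 : (R + a/2)^4 / (a/2)^4 ≤ (⌈(R + a/2)^4 / (a/2)^4⌉₊ : ℝ) := Nat.le_ceil _
    push_cast at h1
    linarith
  refine ⟨hfin, ?_⟩
  have := pack_card L lam a ha hmin hal r R hr hrR hfin.toFinset
    (fun f hf => (Set.Finite.mem_toFinset hfin).1 hf)
  rwa [← Set.ncard_eq_toFinset_card S hfin] at this

lemma exp_int (s : ℝ) :
    ∫ t in Ioi s, Real.pi * Real.exp (-Real.pi * t) = Real.exp (-Real.pi * s) := by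
  have hderiv : ∀ x ∈ Ici s, HasDerivAt (fun t : ℝ => -Real.exp (-Real.pi * t))
      (Real.pi * Real.exp (-Real.pi * x)) x := by
    intro x _
    have h1 : HasDerivAt (fun t : ℝ => -Real.pi * t) (-Real.pi) x := by
      simpa using (hasDerivAt_id x).const_mul (-Real.pi)
    have h2 := (h1.exp).neg
    exact h2.congr_deriv (by ring)
  have hint : IntegrableOn (fun t : ℝ => Real.pi * Real.exp (-Real.pi * t)) (Ioi s) :=
    (exp_neg_integrableOn_Ioi s Real.pi_pos).const_mul Real.pi
  have htend : Tendsto (fun t : ℝ => -Real.exp (-Real.pi * t)) atTop (𝓝 0) := by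
    rw [show (0:ℝ) = -0 by ring]
    apply Tendsto.neg
    apply Real.tendsto_exp_atBot.comp
    exact tendsto_id.const_mul_atTop_of_neg (by linarith [Real.pi_pos])
  have := integral_Ioi_of_hasDerivAt_of_tendsto' hderiv hint htend
  rw [this]
  ring

lemma B_bigO (a c1 : ℝ) (ha : 0 < a) (hc1 : 0 ≤ c1) :
    (fun t : ℝ => ((2 * Real.sqrt t / a + 1) ^ 4 - c1) * (Real.pi * Real.exp (-Real.pi * t)))
      =O[atTop] fun x => Real.exp (-1 * x) := by
  rw [Asymptotics.isBigO_iff]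
  refine ⟨Real.pi * ((2 / a + 1) ^ 4 + c1), ?_⟩
  have hpi1 : (0:ℝ) < Real.pi - 1 := by linarith [Real.pi_gt_three]
  have htsq : ∀ᶠ t : ℝ in atTop, t ^ (2:ℝ) * Real.exp (-(Real.pi - 1) * t) ≤ 1 :=
    (tendsto_rpow_mul_exp_neg_mul_atTop_nhds_zero 2 _ hpi1).eventually
      (eventually_le_nhds one_pos)
  filter_upwards [eventually_ge_atTop (1:ℝ), htsq] with t ht1 htq
  have ht0 : (0:ℝ) ≤ t := by linarith
  have hs0 : 0 ≤ Real.sqrt t := Real.sqrt_nonneg t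
  have hs1 : 1 ≤ Real.sqrt t := by
    rw [show (1:ℝ) = Real.sqrt 1 by simp]
    exact Real.sqrt_le_sqrt ht1
  have hsq : Real.sqrt t ^ 2 = t := Real.sq_sqrt ht0
  rw [show t ^ (2:ℝ) = t ^ (2:ℕ) by rw [← Real.rpow_natCast t 2]; norm_num] at htq
  have hB : |(2 * Real.sqrt t / a + 1) ^ 4 - c1| ≤ ((2 / a + 1) ^ 4 + c1) * t ^ 2 := by
    have h1 : 2 * Real.sqrt t / a + 1 ≤ (2 / a + 1) * Real.sqrt t := by
      have : 2 * Real.sqrt t / a = 2 / a * Real.sqrt t := by ring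
      rw [this]; nlinarith
    have h2 : (2 * Real.sqrt t / a + 1) ^ 4 ≤ ((2 / a + 1) * Real.sqrt t) ^ 4 :=
      pow_le_pow_left₀ (by positivity) h1 4
    have hs4 : Real.sqrt t ^ 4 = t ^ 2 := by
      rw [show (4:ℕ) = 2 * 2 from rfl, pow_mul, hsq]
    have h3 : ((2 / a + 1) * Real.sqrt t) ^ 4 = (2 / a + 1) ^ 4 * t ^ 2 := by
      rw [mul_pow, hs4]
    have h4 : (0:ℝ) ≤ (2 * Real.sqrt t / a + 1) ^ 4 := by positivity
    have h5 : (1:ℝ) ≤ t ^ 2 := by nlinarith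
    rw [abs_le]
    constructor <;> nlinarith [pow_le_pow_left₀ (by positivity : (0:ℝ) ≤ 2/a+1)
      (le_refl (2/a+1)) 4]
  have hexp : Real.exp (-Real.pi * t) = Real.exp (-(Real.pi - 1) * t) * Real.exp (-t) := by
    rw [← Real.exp_add]; ring_nf
  have he0 : (0:ℝ) < Real.exp (-t) := Real.exp_pos _
  have he1 : (0:ℝ) < Real.exp (-(Real.pi - 1) * t) := Real.exp_pos _
  rw [norm_mul, Real.norm_eq_abs, Real.norm_eq_abs, Real.norm_eq_abs]
  rw [abs_of_pos (by positivity : (0:ℝ) < Real.pi * Real.exp (-Real.pi * t))]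
  rw [show (-1:ℝ) * t = -t by ring, abs_of_pos he0]
  calc |(2 * Real.sqrt t / a + 1) ^ 4 - c1| * (Real.pi * Real.exp (-Real.pi * t))
      ≤ ((2 / a + 1) ^ 4 + c1) * t ^ 2 * (Real.pi * Real.exp (-Real.pi * t)) := by
        apply mul_le_mul_of_nonneg_right hB (by positivity)
    _ = Real.pi * ((2 / a + 1) ^ 4 + c1) * (t ^ 2 * Real.exp (-(Real.pi - 1) * t))
          * Real.exp (-t) := by rw [hexp]; ring
    _ ≤ Real.pi * ((2 / a + 1) ^ 4 + c1) * 1 * Real.exp (-t) := by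
        apply mul_le_mul_of_nonneg_right _ he0.le
        apply mul_le_mul_of_nonneg_left htq (by positivity)
    _ = Real.pi * ((2 / a + 1) ^ 4 + c1) * Real.exp (-t) := by ring

lemma B_integrable (a c1 M : ℝ) (ha : 0 < a) (hc1 : 0 ≤ c1) :
    IntegrableOn
      (fun t : ℝ => ((2 * Real.sqrt t / a + 1) ^ 4 - c1) * (Real.pi * Real.exp (-Real.pi * t)))
      (Ioi M) := by
  apply integrable_of_isBigO_exp_neg one_pos _ (B_bigO a c1 ha hc1)
  apply Continuous.continuousOn
  fun_prop

theorem stmt2 (L : Submodule ℤ (EuclideanSpace ℝ (Fin 4)))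
    (hdisc : DiscreteTopology L)
    (hspan : Submodule.span ℝ (L : Set (EuclideanSpace ℝ (Fin 4))) = ⊤)
    (lam : ℝ)
    (hlam_mem : ∃ f ∈ L, f ≠ 0 ∧ ‖f‖ = lam)
    (hlam_min : ∀ f ∈ L, f ≠ 0 → lam ≤ ‖f‖)
    (a : ℝ) (ha : 0 < a) (M : ℝ) (hM : lam ^ 2 ≤ M) (ha_lam : a ^ 2 ≤ lam ^ 2) :
    (∑' f : {f : EuclideanSpace ℝ (Fin 4) // f ∈ L ∧ M ≤ ‖f‖ ^ 2},
        Real.exp (-Real.pi * ‖(f : EuclideanSpace ℝ (Fin 4))‖ ^ 2)) ≤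
      Real.pi * ∫ u in Set.Ioi M,
        ((2 * Real.sqrt u / a + 1) ^ 4 - (2 * Real.sqrt M / a - 1) ^ 4) *
          Real.exp (-Real.pi * u) := by
  classical
  obtain ⟨f0, hf0L, hf0ne, hf0n⟩ := hlam_mem
  have hlam0 : 0 < lam := hf0n ▸ norm_pos_iff.2 hf0ne
  have hal : a ≤ lam := by nlinarith
  have hM0 : 0 < M := by nlinarith
  have hsM0 : 0 ≤ Real.sqrt M := Real.sqrt_nonneg M
  have hlsM : lam ≤ Real.sqrt M := by
    rw [show lam = Real.sqrt (lam ^ 2) by rw [Real.sqrt_sq hlam0.le]]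
    exact Real.sqrt_le_sqrt hM
  have hasM : a ≤ Real.sqrt M := hal.trans hlsM
  set c1 : ℝ := (2 * Real.sqrt M / a - 1) ^ 4 with hc1def
  have h2Ma : (1:ℝ) ≤ 2 * Real.sqrt M / a - 1 := by
    rw [le_sub_iff_add_le]
    rw [le_div_iff₀ ha]
    linarith
  have hc1 : 0 ≤ c1 := by positivity
  set B : ℝ → ℝ := fun t => (2 * Real.sqrt t / a + 1) ^ 4 - c1 with hBdef
  -- B is nonnegative for t ≥ M
  have hBnn : ∀ t : ℝ, M ≤ t → 0 ≤ B t := by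
    intro t ht
    have h1 : Real.sqrt M ≤ Real.sqrt t := Real.sqrt_le_sqrt ht
    have h2 : 2 * Real.sqrt M / a - 1 ≤ 2 * Real.sqrt t / a + 1 := by
      have : 2 * Real.sqrt M / a ≤ 2 * Real.sqrt t / a := by
        gcongr
      linarith
    have h3 : c1 ≤ (2 * Real.sqrt t / a + 1) ^ 4 :=
      pow_le_pow_left₀ (by linarith) h2 4
    simp only [hBdef]
    linarith
  -- counting bound
  have hcount : ∀ t : ℝ, M ≤ t →
      {f : E4 | f ∈ L ∧ Real.sqrt M ≤ ‖f‖ ∧ ‖f‖ ≤ Real.sqrt t}.Finite ∧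
      (({f : E4 | f ∈ L ∧ Real.sqrt M ≤ ‖f‖ ∧ ‖f‖ ≤ Real.sqrt t}.ncard : ℝ) ≤ B t) := by
    intro t ht
    have hst : Real.sqrt M ≤ Real.sqrt t := Real.sqrt_le_sqrt ht
    obtain ⟨hfin, hbound⟩ := pack_set L lam a ha hlam_min hal (Real.sqrt M) (Real.sqrt t)
      hsM0 hst
    refine ⟨hfin, ?_⟩
    have hmax : max (Real.sqrt M - a / 2) 0 = Real.sqrt M - a / 2 :=
      max_eq_left (by linarith)
    rw [hmax] at hbound
    have e1 : Real.sqrt t + a / 2 = (2 * Real.sqrt t / a + 1) * (a / 2) := by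
      field_simp
    have e2 : Real.sqrt M - a / 2 = (2 * Real.sqrt M / a - 1) * (a / 2) := by
      field_simp
    rw [e1, e2, mul_pow, mul_pow] at hbound
    have ha24 : (0:ℝ) < (a / 2) ^ 4 := by positivity
    have hfinal : (({f : E4 | f ∈ L ∧ Real.sqrt M ≤ ‖f‖ ∧ ‖f‖ ≤ Real.sqrt t}.ncard : ℝ))
        * ((a/2)^4) ≤ B t * ((a/2)^4) := by
      simp only [hBdef, hc1def, sub_mul]
      linarith
    exact le_of_mul_le_mul_right hfinal ha24
  -- countability of the lattice
  have hLcnt : (L : Set E4).Countable := by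
    have hsub : (L : Set E4) ⊆ ⋃ n : ℕ, {f : E4 | f ∈ L ∧ 0 ≤ ‖f‖ ∧ ‖f‖ ≤ (n : ℝ)} := by
      intro f hf
      exact Set.mem_iUnion.2 ⟨⌈‖f‖⌉₊, hf, norm_nonneg f, Nat.le_ceil _⟩
    refine Set.Countable.mono hsub (Set.countable_iUnion fun n => ?_)
    exact ((pack_set L lam a ha hlam_min hal 0 n le_rfl (Nat.cast_nonneg n)).1).countable
  haveI hcnt : Countable {f : E4 // f ∈ L ∧ M ≤ ‖f‖ ^ 2} := by
    have hsub : {f : E4 | f ∈ L ∧ M ≤ ‖f‖ ^ 2} ⊆ (L : Set E4) := fun f hf => hf.1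
    exact (hLcnt.mono hsub).to_subtype
  set c : ℝ → ℝ≥0∞ := fun t => ENNReal.ofReal (Real.pi * Real.exp (-Real.pi * t)) with hcdef
  have hcmeas : Measurable c := by
    apply ENNReal.measurable_ofReal.comp
    fun_prop
  have key1 : ∀ s : ℝ, M ≤ s →
      (∫⁻ t in Ioi M, (Ioi s).indicator c t) = ENNReal.ofReal (Real.exp (-Real.pi * s)) := by
    intro s hs
    rw [lintegral_indicator measurableSet_Ioi]
    rw [Measure.restrict_restrict measurableSet_Ioi]
    rw [Set.Ioi_inter_Ioi, sup_eq_left.mpr hs]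
    rw [hcdef]
    rw [← ofReal_integral_eq_lintegral_ofReal
      ((exp_neg_integrableOn_Ioi s Real.pi_pos).const_mul Real.pi)
      (ae_of_all _ fun t => by positivity), exp_int]
  have step2 : (∑' f : {f : E4 // f ∈ L ∧ M ≤ ‖f‖ ^ 2},
        ENNReal.ofReal (Real.exp (-Real.pi * ‖(f : E4)‖ ^ 2)))
      = ∫⁻ t in Ioi M, ∑' f : {f : E4 // f ∈ L ∧ M ≤ ‖f‖ ^ 2},
          (Ioi (‖(f : E4)‖ ^ 2)).indicator c t := by
    rw [lintegral_tsum fun f => (hcmeas.indicator measurableSet_Ioi).aemeasurable]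
    exact tsum_congr fun f => (key1 _ f.2.2).symm
  have step3 : ∀ t : ℝ, (∑' f : {f : E4 // f ∈ L ∧ M ≤ ‖f‖ ^ 2},
      (Ioi (‖(f : E4)‖ ^ 2)).indicator c t)
      ≤ ENNReal.ofReal (B t * (Real.pi * Real.exp (-Real.pi * t))) := by
    intro t
    by_cases ht : M < t
    · have heq : ∀ f : {f : E4 // f ∈ L ∧ M ≤ ‖f‖ ^ 2},
          (Ioi (‖(f : E4)‖ ^ 2)).indicator c t
            = Set.indicator {g : {f : E4 // f ∈ L ∧ M ≤ ‖f‖ ^ 2} | ‖(g : E4)‖ ^ 2 < t}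
                (fun _ => c t) f := by
        intro f
        by_cases h : ‖(f : E4)‖ ^ 2 < t
        · rw [Set.indicator_of_mem (Set.mem_Ioi.mpr h), Set.indicator_of_mem
            (show f ∈ {g : {f : E4 // f ∈ L ∧ M ≤ ‖f‖ ^ 2} | ‖(g : E4)‖ ^ 2 < t} from h)]
        · rw [Set.indicator_of_notMem (by simpa using h), Set.indicator_of_notMem
            (show f ∉ {g : {f : E4 // f ∈ L ∧ M ≤ ‖f‖ ^ 2} | ‖(g : E4)‖ ^ 2 < t} from h)]
      rw [tsum_congr heq, ← tsum_subtype]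
      set T := {g : {f : E4 // f ∈ L ∧ M ≤ ‖f‖ ^ 2} | ‖(g : E4)‖ ^ 2 < t} with hT
      set V := {f : E4 | f ∈ L ∧ Real.sqrt M ≤ ‖f‖ ∧ ‖f‖ ≤ Real.sqrt t} with hV
      have him : Subtype.val '' T ⊆ V := by
        rintro _ ⟨g, hgT, rfl⟩
        obtain ⟨hgL, hgM⟩ := g.2
        refine ⟨hgL, ?_, ?_⟩
        · calc Real.sqrt M ≤ Real.sqrt (‖(g : E4)‖ ^ 2) := Real.sqrt_le_sqrt hgM
            _ = ‖(g : E4)‖ := Real.sqrt_sq (norm_nonneg _)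
        · calc ‖(g : E4)‖ = Real.sqrt (‖(g : E4)‖ ^ 2) := (Real.sqrt_sq (norm_nonneg _)).symm
            _ ≤ Real.sqrt t := Real.sqrt_le_sqrt (le_of_lt hgT)
      have hVfin := (hcount t ht.le).1
      have hTfin : T.Finite := Set.Finite.of_finite_image (hVfin.subset him)
        Subtype.val_injective.injOn
      have hTcard : (T.ncard : ℝ) ≤ B t := by
        have h1 : T.ncard = (Subtype.val '' T).ncard :=
          (Set.ncard_image_of_injective T Subtype.val_injective).symm
        have h2 : (Subtype.val '' T).ncard ≤ V.ncard := Set.ncard_le_ncard him hVfin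
        calc (T.ncard : ℝ) = ((Subtype.val '' T).ncard : ℝ) := by rw [h1]
          _ ≤ (V.ncard : ℝ) := Nat.cast_le.mpr h2
          _ ≤ B t := (hcount t ht.le).2
      haveI := hTfin.fintype
      rw [tsum_fintype, Finset.sum_const, nsmul_eq_mul, Finset.card_univ]
      have hcard : ((Fintype.card T : ℕ) : ℝ≥0∞) = ((T.ncard : ℕ) : ℝ≥0∞) := by
        rw [← Nat.card_coe_set_eq, Nat.card_eq_fintype_card]
      rw [hcard]
      rw [ENNReal.ofReal_mul (hBnn t ht.le)]
      apply mul_le_mul_left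
      rw [show ((T.ncard : ℕ) : ℝ≥0∞) = ENNReal.ofReal ((T.ncard : ℕ) : ℝ) by
        rw [ENNReal.ofReal_natCast]]
      exact ENNReal.ofReal_le_ofReal hTcard
    · push_neg at ht
      have hzero : ∀ f : {f : E4 // f ∈ L ∧ M ≤ ‖f‖ ^ 2},
          (Ioi (‖(f : E4)‖ ^ 2)).indicator c t = 0 := by
        intro f
        apply Set.indicator_of_notMem
        simp only [mem_Ioi, not_lt]
        exact ht.trans f.2.2
      rw [tsum_congr hzero, tsum_zero]
      exact bot_le
  have hInt : IntegrableOn (fun t : ℝ => B t * (Real.pi * Real.exp (-Real.pi * t))) (Ioi M) :=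
    B_integrable a c1 M ha hc1
  have hnn : 0 ≤ᵐ[volume.restrict (Ioi M)]
      fun t : ℝ => B t * (Real.pi * Real.exp (-Real.pi * t)) := by
    filter_upwards [ae_restrict_mem measurableSet_Ioi] with t ht
    exact mul_nonneg (hBnn t (le_of_lt ht)) (by positivity)
  have step4 : (∫⁻ t in Ioi M, ENNReal.ofReal (B t * (Real.pi * Real.exp (-Real.pi * t))))
      = ENNReal.ofReal (∫ t in Ioi M, B t * (Real.pi * Real.exp (-Real.pi * t))) :=
    (ofReal_integral_eq_lintegral_ofReal hInt hnn).symm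
  have hIeq : (∫ t in Ioi M, B t * (Real.pi * Real.exp (-Real.pi * t)))
      = Real.pi * ∫ u in Ioi M, B u * Real.exp (-Real.pi * u) := by
    rw [show (fun t : ℝ => B t * (Real.pi * Real.exp (-Real.pi * t)))
        = fun t : ℝ => Real.pi * (B t * Real.exp (-Real.pi * t)) from funext fun t => by ring]
    exact integral_const_mul _ _
  have hAle : (∑' f : {f : E4 // f ∈ L ∧ M ≤ ‖f‖ ^ 2},
        ENNReal.ofReal (Real.exp (-Real.pi * ‖(f : E4)‖ ^ 2)))
      ≤ ENNReal.ofReal (Real.pi * ∫ u in Ioi M, B u * Real.exp (-Real.pi * u)) := by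
    rw [step2]
    calc (∫⁻ t in Ioi M, ∑' f : {f : E4 // f ∈ L ∧ M ≤ ‖f‖ ^ 2},
          (Ioi (‖(f : E4)‖ ^ 2)).indicator c t)
        ≤ ∫⁻ t in Ioi M, ENNReal.ofReal (B t * (Real.pi * Real.exp (-Real.pi * t))) :=
          lintegral_mono step3
      _ = _ := by rw [step4, hIeq]
  have hRHS0 : 0 ≤ Real.pi * ∫ u in Ioi M, B u * Real.exp (-Real.pi * u) :=
    mul_nonneg Real.pi_pos.le (setIntegral_nonneg measurableSet_Ioi fun t ht =>
      mul_nonneg (hBnn t (le_of_lt ht)) (Real.exp_pos _).le)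
  have hAne : (∑' f : {f : E4 // f ∈ L ∧ M ≤ ‖f‖ ^ 2},
      ENNReal.ofReal (Real.exp (-Real.pi * ‖(f : E4)‖ ^ 2))) ≠ ⊤ :=
    (lt_of_le_of_lt hAle ENNReal.ofReal_lt_top).ne
  have hsum : Summable (fun f : {f : E4 // f ∈ L ∧ M ≤ ‖f‖ ^ 2} =>
      Real.exp (-Real.pi * ‖(f : E4)‖ ^ 2)) := by
    have := ENNReal.summable_toReal hAne
    simpa [ENNReal.toReal_ofReal (Real.exp_pos _).le] using this
  have hofReal := ENNReal.ofReal_tsum_of_nonneg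
    (fun f : {f : E4 // f ∈ L ∧ M ≤ ‖f‖ ^ 2} => (Real.exp_pos (-Real.pi * ‖(f : E4)‖ ^ 2)).le)
    hsum
  rw [← ENNReal.ofReal_le_ofReal_iff hRHS0, hofReal]
  exact hAle
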